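/- Let X and Y be metric spaces with bounded geometry whose metrics take values in the non-negative integers. If X and Y are quasi-isometric, then ad_X ≈ ad_Y, i.e., the asymptotic dimension functions of X and Y have the same growth type. -/

import Mathlib

open scoped ENNReal

namespace AsdimGrowth

variable {X : Type*}

/-- `U` is a cover of `X`. -/
def IsCover (U : Set (Set X)) : Prop := ∀ x : X, ∃ u ∈ U, x ∈ u

/-- A family of subsets is uniformly bounded if the diameters of its members
admit a common finite bound. -/
def UnifBdd (d : X → X → ℝ) (U : Set (Set X)) : Prop :=
  ∃ R : ℝ, ∀ u ∈ U, ∀ a ∈ u, ∀ b ∈ u, d a b ≤ R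

/-- The multiplicity of a family: the supremum over points `x` of the number of
members containing `x` (an extended natural number). -/
noncomputable def mult (U : Set (Set X)) : ℕ∞ :=
  ⨆ x : X, {u | u ∈ U ∧ x ∈ u}.encard

/-- `LebGT d U lam` says the Lebesgue number of `U` exceeds `lam`: there is `l > lam`
such that every subset of diameter at most `l` lies in some member of `U`. -/
def LebGT (d : X → X → ℝ) (U : Set (Set X)) (lam : ℝ) : Prop :=
  ∃ l : ℝ, lam < l ∧ ∀ A : Set X, (∀ a ∈ A, ∀ b ∈ A, d a b ≤ l) → ∃ u ∈ U, A ⊆ u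

/-- The asymptotic dimension function `ad_X(lam)`: the least multiplicity of a
uniformly bounded cover of Lebesgue number `> lam`, minus one (`∞` if there is no
such cover). -/
noncomputable def adFun (d : X → X → ℝ) (lam : ℝ) : ℕ∞ :=
  sInf {m : ℕ∞ | ∃ U : Set (Set X),
    IsCover U ∧ UnifBdd d U ∧ LebGT d U lam ∧ mult U = m} - 1

/-- The asymptotic dimension function, valued in `ℝ≥0∞`. -/
noncomputable def adFunE (d : X → X → ℝ) : ℝ → ℝ≥0∞ :=
  fun lam => (adFun d lam : ℝ≥0∞)

/-- Growth domination of functions: `f ⪯ g` iff there is `k ∈ ℕ` with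
`f(x) ≤ k·g(kx+k)+k` for all `x > k`. -/
def FDom (f g : ℝ → ℝ≥0∞) : Prop :=
  ∃ k : ℕ, ∀ x : ℝ, (k : ℝ) < x → f x ≤ k * g (k * x + k) + k

/-- Growth equivalence of functions: `f ≈ g` iff `f ⪯ g` and `g ⪯ f`. -/
def FEquiv (f g : ℝ → ℝ≥0∞) : Prop := FDom f g ∧ FDom g f

end AsdimGrowth

open AsdimGrowth

/-- `adFun` is monotone in the Lebesgue-number parameter. -/
lemma adFun_mono' {X : Type*} (d : X → X → ℝ) {s t : ℝ} (h : s ≤ t) :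
    adFun d s ≤ adFun d t := by
  unfold adFun
  refine tsub_le_tsub_right (sInf_le_sInf ?_) 1
  rintro m ⟨U, h1, h2, ⟨l, hl, hl2⟩, h4⟩
  exact ⟨U, h1, h2, ⟨l, lt_of_le_of_lt h hl, hl2⟩, h4⟩

/-- Pulling back covers along a coarse map bounds `adFun`. -/
lemma adFun_pullback' {X Y : Type*} (dX : X → X → ℝ) (dY : Y → Y → ℝ) (g : X → Y)
    (α β t : ℝ) (hα : 1 ≤ α)
    (h1 : ∀ x x', dY (g x) (g x') ≤ α * dX x x' + β)
    (h2 : ∀ x x', dX x x' ≤ α * dY (g x) (g x') + β) :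
    adFun dX t ≤ adFun dY (α * t + β) := by
  have hα0 : (0:ℝ) < α := lt_of_lt_of_le one_pos hα
  unfold adFun
  refine tsub_le_tsub_right (le_sInf ?_) 1
  rintro m ⟨U, hcov, ⟨R, hR⟩, ⟨l', hl', hl'2⟩, hm⟩
  refine le_trans (sInf_le ⟨(Set.preimage g) '' U, ?_, ?_, ?_, rfl⟩) ?_
  · intro x
    obtain ⟨u, hu, hxu⟩ := hcov (g x)
    exact ⟨g ⁻¹' u, ⟨u, hu, rfl⟩, hxu⟩
  · refine ⟨α * R + β, ?_⟩
    rintro v ⟨u, hu, rfl⟩ a ha b hb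
    calc dX a b ≤ α * dY (g a) (g b) + β := h2 a b
      _ ≤ α * R + β :=
        add_le_add_left (mul_le_mul_of_nonneg_left (hR u hu _ ha _ hb) hα0.le) β
  · refine ⟨(l' - β) / α, ?_, ?_⟩
    · rw [lt_div_iff₀ hα0]; nlinarith
    · intro A hA
      have hdiam : ∀ p ∈ g '' A, ∀ q ∈ g '' A, dY p q ≤ l' := by
        rintro p ⟨a, ha, rfl⟩ q ⟨b, hb, rfl⟩
        have hab := hA a ha b hb
        calc dY (g a) (g b) ≤ α * dX a b + β := h1 a b
          _ ≤ α * ((l' - β) / α) + β := by nlinarith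
          _ = l' := by field_simp; ring
      obtain ⟨u, hu, hsub⟩ := hl'2 (g '' A) hdiam
      exact ⟨g ⁻¹' u, ⟨u, hu, rfl⟩, fun a ha => hsub ⟨a, ha, rfl⟩⟩
  · rw [← hm]
    refine iSup_le fun x =>
      le_trans ?_ (le_iSup (fun y : Y => {u | u ∈ U ∧ y ∈ u}.encard) (g x))
    refine le_trans (Set.encard_le_encard ?_)
      (Set.encard_image_le (Set.preimage g) {u | u ∈ U ∧ g x ∈ u})
    rintro v ⟨⟨u, hu, rfl⟩, hxv⟩
    exact ⟨u, ⟨hu, hxv⟩, rfl⟩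

/-- From a coarse map we get growth domination of the `adFunE` functions. -/
lemma fdom_of_maps' {X Y : Type*} (dX : X → X → ℝ) (dY : Y → Y → ℝ) (g : X → Y)
    (α β : ℝ) (hα : 1 ≤ α) (hβ : 0 ≤ β)
    (h1 : ∀ x x', dY (g x) (g x') ≤ α * dX x x' + β)
    (h2 : ∀ x x', dX x x' ≤ α * dY (g x) (g x') + β) :
    FDom (adFunE dX) (adFunE dY) := by
  refine ⟨⌈α⌉₊ + ⌈β⌉₊ + 1, fun x hx => ?_⟩
  set k : ℕ := ⌈α⌉₊ + ⌈β⌉₊ + 1 with hk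
  have hαk : α ≤ (k : ℝ) := by
    have h1 : (⌈α⌉₊ : ℝ) ≤ (k : ℝ) := Nat.cast_le.mpr (by omega)
    linarith [Nat.le_ceil α]
  have hβk : β ≤ (k : ℝ) := by
    have h1 : (⌈β⌉₊ : ℝ) ≤ (k : ℝ) := Nat.cast_le.mpr (by omega)
    linarith [Nat.le_ceil β]
  have hx0 : 0 < x := lt_of_le_of_lt (by positivity) hx
  have hmono : adFun dX x ≤ adFun dY ((k : ℝ) * x + k) :=
    le_trans (adFun_pullback' dX dY g α β x hα h1 h2)
      (adFun_mono' dY (by nlinarith))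
  have hcast : (adFun dX x : ℝ≥0∞) ≤ (adFun dY ((k : ℝ) * x + k) : ℝ≥0∞) := by
    exact_mod_cast hmono
  refine le_trans hcast (le_trans ?_ le_self_add)
  exact le_mul_of_one_le_left (zero_le) (by exact_mod_cast Nat.one_le_iff_ne_zero.mpr (by omega))

/-- Let `X` and `Y` be metric spaces with bounded geometry whose
metrics take values in the non-negative integers. If `X` and `Y` are quasi-isometric,
then their asymptotic dimension functions have the same growth type. -/
theorem adFun_qi_invariant {X Y : Type*} [MetricSpace X] [MetricSpace Y]
    (hintX : ∀ x x' : X, ∃ n : ℕ, dist x x' = (n : ℝ))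
    (hintY : ∀ y y' : Y, ∃ n : ℕ, dist y y' = (n : ℝ))
    (hbgX : ∀ r : ℝ, 0 < r → ∃ N : ℕ, ∀ x : X, {x' : X | dist x x' ≤ r}.encard ≤ N)
    (hbgY : ∀ r : ℝ, 0 < r → ∃ N : ℕ, ∀ y : Y, {y' : Y | dist y y' ≤ r}.encard ≤ N)
    (F : X → Y) (lam c : ℝ) (hlam : 1 ≤ lam) (hc : 0 ≤ c)
    (hlower : ∀ x x' : X, dist x x' / lam - c ≤ dist (F x) (F x'))
    (hupper : ∀ x x' : X, dist (F x) (F x') ≤ lam * dist x x' + c)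
    (hdense : ∀ y : Y, ∃ x : X, dist y (F x) ≤ c) :
    FEquiv (adFunE (fun a b : X => dist a b)) (adFunE (fun a b : Y => dist a b)) := by
  have hl0 : (0:ℝ) < lam := lt_of_lt_of_le one_pos hlam
  constructor
  · refine fdom_of_maps' _ _ F lam (lam * c) hlam (by positivity) ?_ ?_
    · intro x x'
      have h := hupper x x'
      nlinarith
    · intro x x'
      have h := hlower x x'
      have h2 : dist x x' / lam ≤ dist (F x) (F x') + c := by linarith
      calc dist x x' = dist x x' / lam * lam := (div_mul_cancel₀ _ hl0.ne').symm
        _ ≤ (dist (F x) (F x') + c) * lam := mul_le_mul_of_nonneg_right h2 hl0.le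
        _ = lam * dist (F x) (F x') + lam * c := by ring
  · choose G hG using hdense
    refine fdom_of_maps' _ _ G lam (3 * (lam * c)) hlam (by positivity) ?_ ?_
    · intro y y'
      have h := hlower (G y) (G y')
      have ht := dist_triangle4 (F (G y)) y y' (F (G y'))
      have hy : dist (F (G y)) y ≤ c := by rw [dist_comm]; exact hG y
      have hy' : dist y' (F (G y')) ≤ c := hG y'
      have h2 : dist (G y) (G y') / lam ≤ dist y y' + 3 * c := by linarith
      calc dist (G y) (G y') = dist (G y) (G y') / lam * lam :=
            (div_mul_cancel₀ _ hl0.ne').symm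
        _ ≤ (dist y y' + 3 * c) * lam := mul_le_mul_of_nonneg_right h2 hl0.le
        _ = lam * dist y y' + 3 * c * lam := by ring
        _ ≤ lam * dist y y' + 3 * (lam * c) := by nlinarith
    · intro y y'
      have ht := dist_triangle4 y (F (G y)) (F (G y')) y'
      have hu := hupper (G y) (G y')
      have hy : dist y (F (G y)) ≤ c := hG y
      have hy' : dist (F (G y')) y' ≤ c := by rw [dist_comm]; exact hG y'
      nlinarith
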